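/- If X is a simplicial complex with both the sphere and disc local injectivity properties up to dimension d, then X is d-connected. -/

import Mathlib

/-! Shared simplicial-complex framework. -/

/-- The model `m`-sphere, for an integer `m`; it is empty when `m < 0`,
and is the unit sphere in `ℝ^{m+1}` when `m ≥ 0`. -/
def sphereSpace (m : ℤ) : Type :=
  {x : EuclideanSpace ℝ (Fin (m + 1).toNat) // ‖x‖ = 1 ∧ 0 ≤ m}

noncomputable instance (m : ℤ) : TopologicalSpace (sphereSpace m) := by
  unfold sphereSpace; infer_instance

/-- The model `m`-disc: empty for `m < 0`, a point for `m = 0`,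
the closed unit ball in `ℝ^m` for `m ≥ 0`. -/
def discSpace (m : ℤ) : Type :=
  {x : EuclideanSpace ℝ (Fin m.toNat) // ‖x‖ ≤ 1 ∧ 0 ≤ m}

noncomputable instance (m : ℤ) : TopologicalSpace (discSpace m) := by
  unfold discSpace; infer_instance

/-- The inclusion of the model `m`-sphere as the boundary of the model `(m+1)`-disc. -/
noncomputable local instance (priority := low) (α : Type*) : DecidableEq α :=
  fun _ _ => Classical.propDecidable _

def sphereToDisc (m : ℤ) (x : sphereSpace m) : discSpace (m + 1) :=
  ⟨x.1, le_of_eq x.2.1, by have := x.2.2; omega⟩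

/-- An abstract simplicial complex on a vertex set `V`: a collection of nonempty
finite subsets of `V` closed under passing to nonempty subsets. -/
def IsComplex {V : Type*} (K : Set (Finset V)) : Prop :=
  ∀ σ ∈ K, σ ≠ ∅ ∧ ∀ τ ⊆ σ, τ ≠ ∅ → τ ∈ K

/-- The link of a simplex `σ` in `K`. -/
def link {V : Type*} (K : Set (Finset V)) (σ : Finset V) : Set (Finset V) :=
  {τ | τ ∈ K ∧ Disjoint σ τ ∧ σ ∪ τ ∈ K}

/-- The geometric realization of `K`: formal convex combinations of vertices
supported on a simplex of `K`. -/
def spc {V : Type*} (K : Set (Finset V)) : Type _ :=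
  {w : V →₀ ℝ // w.support ∈ K ∧ (∀ v, 0 ≤ w v) ∧ (w.sum fun _ c => c) = 1}

instance {V : Type*} (K : Set (Finset V)) : TopologicalSpace (spc K) :=
  TopologicalSpace.induced (fun w => ((w.1 : V →₀ ℝ) : V → ℝ)) inferInstance

/-- A simplicial map from `K` to `X`, given on vertices by `f`. -/
def IsSimplicial {V U : Type*} (K : Set (Finset V)) (X : Set (Finset U)) (f : V → U) : Prop :=
  ∀ σ ∈ K, σ.image f ∈ X

/-- `f` is locally injective on `K`: it preserves dimensions of simplices. -/
def LocInj {V U : Type*} (K : Set (Finset V)) (f : V → U) : Prop :=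
  ∀ σ ∈ K, (σ.image f).card = σ.card

/-- `K` is a combinatorial triangulation of the `m`-sphere. -/
def IsCombTriSphere {V : Type*} (m : ℤ) (K : Set (Finset V)) : Prop :=
  IsComplex K ∧ Nonempty (spc K ≃ₜ sphereSpace m) ∧
    ∀ σ ∈ K, Nonempty (spc (link K σ) ≃ₜ sphereSpace (m - σ.card))

/-- `K` is a combinatorial triangulation of the `m`-disc. -/
def IsCombTriDisc {V : Type*} (m : ℤ) (K : Set (Finset V)) : Prop :=
  IsComplex K ∧ Nonempty (spc K ≃ₜ discSpace m) ∧
    ∀ σ ∈ K, Nonempty (spc (link K σ) ≃ₜ sphereSpace (m - σ.card)) ∨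
      Nonempty (spc (link K σ) ≃ₜ discSpace (m - σ.card))

/-- The boundary of a combinatorial triangulation of the `m`-disc:
the simplices whose link is not a sphere of the complementary dimension. -/
def discBoundary {V : Type*} (m : ℤ) (K : Set (Finset V)) : Set (Finset V) :=
  {σ ∈ K | ¬ Nonempty (spc (link K σ) ≃ₜ sphereSpace (m - σ.card))}

/-- The locally injective simplicial map `f` from a triangulated `m`-sphere `K` to `X`
extends to a locally injective simplicial map on a combinatorial triangulation of the
`(m+1)`-disc whose boundary is `K`. -/
def ExtendsToDisc {U V : Type} (X : Set (Finset U)) (m : ℤ) (K : Set (Finset V))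
    (f : V → U) : Prop :=
  ∃ (W : Type) (L : Set (Finset W)) (j : V → W) (F : W → U),
    IsCombTriDisc (m + 1) L ∧ Function.Injective j ∧
    (∀ σ ∈ K, σ.image j ∈ L) ∧
    ((fun σ : Finset V => σ.image j) '' K = discBoundary (m + 1) L) ∧
    (∀ v, F (j v) = f v) ∧ IsSimplicial L X F ∧ LocInj L F

/-- `X` has the disc local injectivity property up to dimension `d`. -/
def HasDiscLII {U : Type} (X : Set (Finset U)) (d : ℤ) : Prop :=
  ∀ m : ℤ, m ≤ d → ∀ (V : Type) (K : Set (Finset V)) (f : V → U),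
    IsCombTriSphere m K → IsSimplicial K X f → LocInj K f → ExtendsToDisc X m K f

/-- The continuous map `G` realizes the simplicial map `g`. -/
def Realizes {V U : Type} (K : Set (Finset V)) (X : Set (Finset U)) (g : V → U)
    (G : C(spc K, spc X)) : Prop :=
  ∀ w : spc K, ((G w).1 : U →₀ ℝ) = Finsupp.mapDomain g w.1

/-- `X` has the sphere local injectivity property up to dimension `d`. -/
def HasSphereLII {U : Type} (X : Set (Finset U)) (d : ℤ) : Prop :=
  ∀ m : ℤ, m ≤ d → ∀ f : C(sphereSpace m, spc X),
    ∃ (V : Type) (K : Set (Finset V)) (g : V → U) (e : spc K ≃ₜ sphereSpace m)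
      (G : C(spc K, spc X)),
      IsCombTriSphere m K ∧ IsSimplicial K X g ∧ LocInj K g ∧ Realizes K X g G ∧
      (f.comp (e : C(spc K, sphereSpace m))).Homotopic G

/-- A space is `d`-connected (`d ∈ ℤ`): every map from a sphere of dimension `≤ d`
extends over the disc. -/
def DConnected (X : Type*) [TopologicalSpace X] (d : ℤ) : Prop :=
  ∀ m : ℤ, m ≤ d → ∀ f : C(sphereSpace m, X),
    ∃ F : C(discSpace (m + 1), X), ∀ x, F (sphereToDisc m x) = f x

/-- `K` is weakly Cohen–Macaulay of dimension `d`. -/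
def WCM {V : Type*} (K : Set (Finset V)) (d : ℤ) : Prop :=
  DConnected (spc K) (d - 1) ∧ ∀ σ ∈ K, DConnected (spc (link K σ)) (d - σ.card - 1)

/-! ### Auxiliary lemmas for the proof of Statement 3 -/

open Finset in
private lemma mapDomain_apply_eq_sum {V U : Type} (f : V → U) (w : V →₀ ℝ) (u : U)
    (S : Finset V) (hS : w.support ⊆ S) :
    Finsupp.mapDomain f w u = ∑ v ∈ S, if f v = u then w v else 0 := by
  classical
  rw [Finsupp.mapDomain, Finsupp.sum_apply, Finsupp.sum]
  have h : ∀ v : V, Finsupp.single (f v) (w v) u = if f v = u then w v else 0 := by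
    intro v; rw [Finsupp.single_apply]
  simp only [h]
  refine Finset.sum_subset hS ?_
  intro v _ hv
  have : w v = 0 := Finsupp.notMem_support_iff.mp hv
  simp [this]

private lemma spc_sum_over {V : Type} {K : Set (Finset V)} (w : spc K) (S : Finset V)
    (hS : w.1.support ⊆ S) : ∑ v ∈ S, w.1 v = 1 := by
  classical
  have h2 := w.2.2.2
  rw [Finsupp.sum] at h2
  exact (Finset.sum_subset hS (fun v _ hv => Finsupp.notMem_support_iff.mp hv)).symm.trans h2

private lemma continuous_spc_coord {V : Type} (K : Set (Finset V)) (v : V) :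
    Continuous fun w : spc K => w.1 v := by
  have hcoe : Continuous fun w : spc K => ((w.1 : V →₀ ℝ) : V → ℝ) := continuous_induced_dom
  exact (continuous_apply v).comp hcoe

private lemma continuous_real_coord {V U : Type} (K : Set (Finset V)) (f : V → U) (u : U) :
    Continuous fun w : spc K => Finsupp.mapDomain f w.1 u := by
  classical
  rw [continuous_iff_continuousAt]
  intro w₀
  set T := w₀.1.support with hT
  set A : spc K → ℝ := fun w => ∑ v ∈ T, if f v = u then w.1 v else 0 with hA
  set B : spc K → ℝ := fun w => ∑ v ∈ T, w.1 v with hB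
  have hAc : Continuous A := by
    apply continuous_finset_sum
    intro v _
    by_cases h : f v = u
    · simpa [h] using continuous_spc_coord K v
    · simpa [h] using continuous_const
  have hBc : Continuous B := continuous_finset_sum _ fun v _ => continuous_spc_coord K v
  have hlow : ∀ w : spc K, A w ≤ Finsupp.mapDomain f w.1 u := by
    intro w
    rw [mapDomain_apply_eq_sum f w.1 u (w.1.support ∪ T) Finset.subset_union_left]
    refine Finset.sum_le_sum_of_subset_of_nonneg Finset.subset_union_right ?_
    intro v _ _
    by_cases h : f v = u
    · simpa [h] using w.2.2.1 v
    · simp [h]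
  have hupp : ∀ w : spc K, Finsupp.mapDomain f w.1 u ≤ A w + (1 - B w) := by
    intro w
    rw [mapDomain_apply_eq_sum f w.1 u (w.1.support ∪ T) Finset.subset_union_left]
    have hsplit := Finset.sum_sdiff (f := fun v => if f v = u then w.1 v else 0)
      (Finset.subset_union_right (s₁ := w.1.support) (s₂ := T))
    rw [← hsplit]
    have h1 : ∑ v ∈ (w.1.support ∪ T) \ T, (if f v = u then w.1 v else 0) ≤
        ∑ v ∈ (w.1.support ∪ T) \ T, w.1 v := by
      refine Finset.sum_le_sum ?_
      intro v _
      by_cases h : f v = u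
      · simp [h]
      · simpa [h] using w.2.2.1 v
    have h2 : ∑ v ∈ (w.1.support ∪ T) \ T, w.1 v = 1 - B w := by
      have := Finset.sum_sdiff (f := fun v => w.1 v)
        (Finset.subset_union_right (s₁ := w.1.support) (s₂ := T))
      rw [spc_sum_over w _ Finset.subset_union_left] at this
      rw [hB]
      linarith
    linarith [h1, h2]
  have hAw₀ : A w₀ = Finsupp.mapDomain f w₀.1 u := by
    rw [mapDomain_apply_eq_sum f w₀.1 u T (by rw [hT])]
  have hBw₀ : B w₀ = 1 := spc_sum_over w₀ T (by rw [hT])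
  have hg : Filter.Tendsto A (nhds w₀) (nhds (Finsupp.mapDomain f w₀.1 u)) := by
    rw [← hAw₀]; exact hAc.continuousAt
  have hh : Filter.Tendsto (fun w => A w + (1 - B w)) (nhds w₀)
      (nhds (Finsupp.mapDomain f w₀.1 u)) := by
    have : Filter.Tendsto (fun w => A w + (1 - B w)) (nhds w₀) (nhds (A w₀ + (1 - B w₀))) :=
      (hAc.add (continuous_const.sub hBc)).continuousAt
    rwa [hAw₀, hBw₀, sub_self, add_zero] at this
  exact tendsto_of_tendsto_of_tendsto_of_le_of_le hg hh hlow hupp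

/-- The continuous realization of a locally injective simplicial map. -/
noncomputable def realCM {V U : Type} {K : Set (Finset V)} {X : Set (Finset U)} {f : V → U}
    (hs : IsSimplicial K X f) (hl : LocInj K f) : C(spc K, spc X) where
  toFun w := ⟨Finsupp.mapDomain f w.1, by
      have hinj : Set.InjOn f ↑(w.1.support) := Finset.card_image_iff.mp (hl _ w.2.1)
      rw [Finsupp.mapDomain_support_of_injOn w.1 hinj]
      exact hs _ w.2.1, by
      intro u
      rw [mapDomain_apply_eq_sum f w.1 u w.1.support (le_refl _)]
      refine Finset.sum_nonneg ?_
      intro v _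
      by_cases h : f v = u
      · simpa [h] using w.2.2.1 v
      · simp [h], by
      rw [Finsupp.sum_mapDomain_index (fun _ => rfl) (fun _ _ _ => rfl)]
      exact w.2.2.2⟩
  continuous_toFun := by
    apply continuous_induced_rng.2
    exact continuous_pi fun u => continuous_real_coord K f u

private lemma realCM_coe {V U : Type} {K : Set (Finset V)} {X : Set (Finset U)} {f : V → U}
    (hs : IsSimplicial K X f) (hl : LocInj K f) (w : spc K) :
    ((realCM hs hl w).1 : U →₀ ℝ) = Finsupp.mapDomain f w.1 := rfl

private lemma discSpace_contractible {n : ℤ} (hn : 0 ≤ n) : ContractibleSpace (discSpace n) := by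
  have hconv : Convex ℝ {x : EuclideanSpace ℝ (Fin n.toNat) | ‖x‖ ≤ 1 ∧ 0 ≤ n} := by
    intro x hx y hy a b ha hb hab
    refine ⟨?_, hn⟩
    calc ‖a • x + b • y‖ ≤ ‖a • x‖ + ‖b • y‖ := norm_add_le _ _
      _ = a * ‖x‖ + b * ‖y‖ := by
          rw [norm_smul, norm_smul, Real.norm_of_nonneg ha, Real.norm_of_nonneg hb]
      _ ≤ a * 1 + b * 1 := by
          gcongr
          · exact hx.1
          · exact hy.1
      _ = 1 := by linarith
  have hne : Set.Nonempty {x : EuclideanSpace ℝ (Fin n.toNat) | ‖x‖ ≤ 1 ∧ 0 ≤ n} :=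
    ⟨0, by simp, hn⟩
  exact hconv.contractibleSpace hne

instance sphereSpace_compact (m : ℤ) : CompactSpace (sphereSpace m) := by
  have h : IsCompact {x : EuclideanSpace ℝ (Fin (m + 1).toNat) | ‖x‖ = 1 ∧ 0 ≤ m} := by
    by_cases hm : 0 ≤ m
    · have he : {x : EuclideanSpace ℝ (Fin (m + 1).toNat) | ‖x‖ = 1 ∧ 0 ≤ m} =
          Metric.sphere 0 1 := by
        ext x
        simp [hm, Metric.mem_sphere, dist_zero_right]
      rw [he]
      exact isCompact_sphere 0 1
    · have he : {x : EuclideanSpace ℝ (Fin (m + 1).toNat) | ‖x‖ = 1 ∧ 0 ≤ m} = ∅ := by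
        ext x; simp [hm]
      rw [he]
      exact isCompact_empty
  exact isCompact_iff_compactSpace.mp h

instance discSpace_t2 (n : ℤ) : T2Space (discSpace n) := by
  unfold discSpace; infer_instance

/-- The cone construction: a nullhomotopic map on the sphere extends over the disc. -/
private lemma cone_extend {Y : Type} [TopologicalSpace Y] {m : ℤ} (hm : 0 ≤ m)
    (f : C(sphereSpace m, Y)) (hf : f.Nullhomotopic) :
    ∃ F : C(discSpace (m + 1), Y), ∀ x, F (sphereToDisc m x) = f x := by
  classical
  obtain ⟨y, hy⟩ := hf
  obtain ⟨H⟩ := hy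
  have hmem : ∀ (t : unitInterval) (s : sphereSpace m),
      ‖(1 - (t : ℝ)) • s.1‖ ≤ 1 ∧ 0 ≤ m + 1 := by
    intro t s
    constructor
    · rw [norm_smul, s.2.1, mul_one, Real.norm_of_nonneg (by linarith [t.2.2] : (0:ℝ) ≤ 1 - t)]
      linarith [t.2.1]
    · omega
  set c : unitInterval × sphereSpace m → discSpace (m + 1) :=
    fun p => ⟨(1 - (p.1 : ℝ)) • p.2.1, hmem p.1 p.2⟩ with hc_def
  have hc : Continuous c := by
    apply Continuous.subtype_mk
    exact (continuous_const.sub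
      (continuous_subtype_val.comp continuous_fst)).smul
      (continuous_subtype_val.comp continuous_snd)
  have hsurj : Function.Surjective c := by
    intro x
    by_cases hx : x.1 = 0
    · refine ⟨(1, ⟨EuclideanSpace.single (⟨0, by omega⟩ : Fin (m + 1).toNat) (1 : ℝ), ?_, hm⟩),
        Subtype.ext ?_⟩
      · rw [EuclideanSpace.norm_single]; norm_num
      · show (1 - ((1 : unitInterval) : ℝ)) • _ = x.1
        rw [hx]
        norm_num
    · refine ⟨(⟨1 - ‖x.1‖, by constructor <;> [linarith [x.2.1]; linarith [norm_nonneg x.1]]⟩,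
        ⟨‖x.1‖⁻¹ • x.1, norm_smul_inv_norm (𝕜 := ℝ) hx, hm⟩), Subtype.ext ?_⟩
      show (1 - (1 - ‖x.1‖)) • (‖x.1‖⁻¹ • x.1) = x.1
      have h1 : 1 - (1 - ‖x.1‖) = ‖x.1‖ := by ring
      rw [h1, smul_smul, mul_inv_cancel₀ (norm_ne_zero_iff.mpr hx), one_smul]
  set F : discSpace (m + 1) → Y := fun x =>
    if hx : x.1 = 0 then y
    else H (⟨1 - ‖x.1‖, by constructor <;> [linarith [x.2.1]; linarith [norm_nonneg x.1]]⟩,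
      ⟨‖x.1‖⁻¹ • x.1, norm_smul_inv_norm (𝕜 := ℝ) hx, hm⟩) with hF_def
  have key : ∀ p : unitInterval × sphereSpace m, F (c p) = H p := by
    rintro ⟨t, s⟩
    have hnorm : ‖(1 - (t : ℝ)) • s.1‖ = 1 - (t : ℝ) := by
      rw [norm_smul, s.2.1, mul_one, Real.norm_of_nonneg (by linarith [t.2.2])]
    simp only [hF_def]
    split
    · rename_i hzero
      have h' : (1 - (t : ℝ)) • s.1 = 0 := hzero
      have ht1 : (t : ℝ) = 1 := by
        have h2 := hnorm
        rw [h', norm_zero] at h2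
        linarith
      have ht : t = 1 := Subtype.ext ht1
      rw [ht]
      exact (H.apply_one s).symm
    · rename_i hzero
      have h : ¬(1 - (t : ℝ)) • s.1 = 0 := hzero
      have hne : (1 - (t : ℝ)) ≠ 0 := by
        intro h0
        exact h (by rw [h0, zero_smul])
      congr 1
      refine Prod.ext (Subtype.ext ?_) (Subtype.ext ?_)
      · show 1 - ‖(1 - (t : ℝ)) • s.1‖ = (t : ℝ)
        rw [hnorm]; ring
      · show ‖(1 - (t : ℝ)) • s.1‖⁻¹ • ((1 - (t : ℝ)) • s.1) = s.1
        rw [hnorm, smul_smul, inv_mul_cancel₀ hne, one_smul]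
  have hq := (hc.isClosedMap).isQuotientMap hc hsurj
  have hF : Continuous F := by
    rw [hq.continuous_iff]
    have : F ∘ c = fun p => H p := funext key
    rw [this]
    exact H.continuous
  refine ⟨⟨F, hF⟩, ?_⟩
  intro x
  have hx0 : sphereToDisc m x = c (0, x) := by
    refine Subtype.ext ?_
    show x.1 = (1 - ((0 : unitInterval) : ℝ)) • x.1
    norm_num
  show F (sphereToDisc m x) = f x
  rw [hx0, key (0, x)]
  exact H.apply_zero x

/-- If a simplicial complex `X` has both the sphere and the disc local
injectivity properties up to dimension `d`, then (the geometric realization of) `X` is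
`d`-connected. -/
theorem stmt3 {U : Type} (X : Set (Finset U)) (d : ℤ) (hX : IsComplex X)
    (hsphere : HasSphereLII X d) (hdisc : HasDiscLII X d) :
    DConnected (spc X) d := by
  intro m hm f
  by_cases hm2 : m ≤ -2
  · -- Both the sphere and the disc are empty.
    have hde : IsEmpty (discSpace (m + 1)) := ⟨fun x => by have := x.2.2; omega⟩
    have hse : IsEmpty (sphereSpace m) := ⟨fun x => by have := x.2.2; omega⟩
    refine ⟨⟨fun x => (hde.false x).elim, ?_⟩, fun x => (hse.false x).elim⟩
    exact continuous_iff_continuousAt.2 fun x => (hde.false x).elim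
  obtain ⟨V, K, g, e, G, hK, hgs, hgl, hreal, hhom⟩ := hsphere m hm f
  obtain ⟨W, L, j, F, hL, hjinj, hjK, hbound, hFj, hFs, hFl⟩ := hdisc m hm V K g hK hgs hgl
  obtain ⟨eL⟩ := hL.2.1
  by_cases hm0 : 0 ≤ m
  · -- Main case.
    have hjl : LocInj K j := fun σ _ => Finset.card_image_of_injective σ hjinj
    have hcontr : ContractibleSpace (spc L) := by
      haveI := discSpace_contractible (show (0:ℤ) ≤ m + 1 by omega)
      exact eL.contractibleSpace
    have hGeq : G = (realCM hFs hFl).comp (realCM hjK hjl) := by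
      ext w
      refine Subtype.ext ?_
      rw [hreal w]
      show Finsupp.mapDomain g w.1 = Finsupp.mapDomain F (Finsupp.mapDomain j w.1)
      rw [← Finsupp.mapDomain_comp]
      congr 1
      funext v
      exact (hFj v).symm
    have hRFnull : (realCM hFs hFl).Nullhomotopic := by
      have h := (id_nullhomotopic (spc L)).comp_right (realCM hFs hFl)
      rwa [ContinuousMap.comp_id] at h
    have hGnull : G.Nullhomotopic := by
      rw [hGeq]
      exact hRFnull.comp_left _
    obtain ⟨y, hGy⟩ := hGnull
    have h1 : (f.comp (e : C(spc K, sphereSpace m))).Homotopic (ContinuousMap.const _ y) :=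
      hhom.trans hGy
    have h2 := h1.comp (ContinuousMap.Homotopic.refl
      ((e.symm : C(sphereSpace m, spc K))))
    have h3 : (f.comp (e : C(spc K, sphereSpace m))).comp
        (e.symm : C(sphereSpace m, spc K)) = f := by
      ext x
      simp
    have h4 : (ContinuousMap.const (spc K) y).comp (e.symm : C(sphereSpace m, spc K)) =
        ContinuousMap.const (sphereSpace m) y := rfl
    rw [h3, h4] at h2
    exact cone_extend hm0 f ⟨y, h2⟩
  · -- Here m = -1: the sphere is empty and the disc is a point.
    have hm1 : m = -1 := by omega
    have hse : IsEmpty (sphereSpace m) := ⟨fun x => by have := x.2.2; omega⟩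
    -- `spc L` is nonempty since it is homeomorphic to the 0-disc.
    have hd0 : discSpace (m + 1) := ⟨0, by simp, by omega⟩
    have w : spc L := eL.symm hd0
    have hτ : w.1.support.image F ∈ X := hFs _ w.2.1
    have hτne : (w.1.support.image F).Nonempty := by
      refine Finset.image_nonempty.2 ?_
      rw [Finset.nonempty_iff_ne_empty]
      exact (hL.1 _ w.2.1).1
    obtain ⟨u, hu⟩ := hτne
    have hsing : ({u} : Finset U) ∈ X :=
      (hX _ hτ).2 {u} (Finset.singleton_subset_iff.mpr hu) (by simp)
    have pt : spc X := ⟨Finsupp.single u 1, by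
        rw [Finsupp.support_single_ne_zero _ one_ne_zero]; exact hsing, by
        intro v
        rw [Finsupp.single_apply]
        split <;> norm_num, by
        rw [Finsupp.sum_single_index]; rfl⟩
    refine ⟨ContinuousMap.const _ pt, fun x => (hse.false x).elim⟩
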